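/- Let A be a selfadjoint operator with 0 ≤ A < 1 and Tr(A) < ∞. Then the von Neumann entropy of the Bose second quantisation satisfies S(Γ(A)) = -Tr( A(1-A)^{-1} log A ) · det(1-A)^{-1}, and the von Neumann entropy of the Fermi second quantisation satisfies S(Λ(A)) = -Tr( A(1+A)^{-1} log A ) · det(1+A). -/

import Mathlib

/-!
STATEMENT 8: Let `A` be selfadjoint with `0 ≤ A < 1` and `Tr(A) < ∞`, encoded by its eigenvalue
sequence `lam` (so `Tr(A) < ∞` is `Summable lam`).  The von Neumann entropy `S(ρ) = -Tr(ρ log ρ)`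
of the Bose second quantisation `Γ(A)` (whose eigenvalues are `μ_k = ∏_n λ_n ^ (k n)`,
`k : ℕ →₀ ℕ`) equals `(-Tr(A(1-A)⁻¹ log A)) ⬝ det(1-A)⁻¹`, and that of the Fermi second
quantisation `Λ(A)` (eigenvalues `μ_s = ∏_{n ∈ s} λ_n`, `s` finite) equals
`(-Tr(A(1+A)⁻¹ log A)) ⬝ det(1+A)`.  All quantities are computed in `ℝ≥0∞` (the entropy terms
`-μ log μ` are nonnegative since `0 ≤ μ ≤ 1`), with the determinants as suprema of partial
products.
-/

open scoped ENNReal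

namespace EntropySQ

variable (lam : ℕ → ℝ)

/-- The eigenvalue of `Γ(A)` associated to an occupation number function `k`. -/
noncomputable def mu (k : ℕ →₀ ℕ) : ℝ≥0∞ :=
  ∏ n ∈ k.support, ENNReal.ofReal (lam n) ^ k n

lemma mu_eq (k : ℕ →₀ ℕ) {s : Finset ℕ} (hs : k.support ⊆ s) :
    mu lam k = ∏ n ∈ s, ENNReal.ofReal (lam n) ^ k n :=
  Finset.prod_subset hs fun n _ hn => by
    rw [Finsupp.notMem_support_iff.mp hn, pow_zero]

lemma mu_add (k₁ k₂ : ℕ →₀ ℕ) : mu lam (k₁ + k₂) = mu lam k₁ * mu lam k₂ := by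
  rw [mu_eq lam _ Finsupp.support_add, mu_eq lam k₁ Finset.subset_union_left,
    mu_eq lam k₂ Finset.subset_union_right, ← Finset.prod_mul_distrib]
  exact Finset.prod_congr rfl fun n _ => by rw [Finsupp.add_apply, pow_add]

lemma mu_single (m : ℕ) (j : ℕ) :
    mu lam (Finsupp.single m j) = ENNReal.ofReal (lam m) ^ j := by
  rw [mu_eq lam _ Finsupp.support_single_subset, Finset.prod_singleton,
    Finsupp.single_eq_same]

/-- Splitting off the `m`-th coordinate of a finitely supported function. -/
noncomputable def eraseEquiv (m : ℕ) : (ℕ →₀ ℕ) ≃ ℕ × {k : ℕ →₀ ℕ // k m = 0} where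
  toFun k := (k m, ⟨k.erase m, Finsupp.erase_same⟩)
  invFun p := Finsupp.single m p.1 + p.2.1
  left_inv k := Finsupp.single_add_erase m k
  right_inv := by
    rintro ⟨j, k', hk'⟩
    have hm : m ∉ k'.support := Finsupp.notMem_support_iff.mpr hk'
    refine Prod.ext ?_ (Subtype.ext ?_)
    · simp [Finsupp.add_apply, hk']
    · simp [Finsupp.erase_add, Finsupp.erase_single, Finsupp.erase_of_notMem_support hm]

lemma tsum_decomp (m : ℕ) (c : ℕ → ℝ≥0∞) :
    ∑' k : ℕ →₀ ℕ, mu lam k * c (k m)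
      = (∑' j : ℕ, ENNReal.ofReal (lam m) ^ j * c j)
          * ∑' k' : {k : ℕ →₀ ℕ // k m = 0}, mu lam k'.1 := by
  rw [← Equiv.tsum_eq (eraseEquiv m).symm (fun k => mu lam k * c (k m))]
  have h : ∀ p : ℕ × {k : ℕ →₀ ℕ // k m = 0},
      mu lam ((eraseEquiv m).symm p) * c (((eraseEquiv m).symm p) m)
        = (ENNReal.ofReal (lam m) ^ p.1 * c p.1) * mu lam p.2.1 := by
    rintro ⟨j, k', hk'⟩
    have h1 : (eraseEquiv m).symm (j, ⟨k', hk'⟩) = Finsupp.single m j + k' := rfl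
    have h2 : (Finsupp.single m j + k') m = j := by
      simp [Finsupp.add_apply, hk']
    rw [h1, mu_add, mu_single, h2]; ring
  rw [tsum_congr h, ENNReal.tsum_prod']
  simp_rw [ENNReal.tsum_mul_left]
  rw [ENNReal.tsum_mul_right]

lemma geom (n : ℕ) (h0 : 0 ≤ lam n) (h1 : lam n < 1) :
    ∑' j : ℕ, ENNReal.ofReal (lam n) ^ j = ENNReal.ofReal ((1 - lam n)⁻¹) := by
  rw [← tsum_geometric_of_lt_one h0 h1,
    ENNReal.ofReal_tsum_of_nonneg (fun j => pow_nonneg h0 j)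
      (summable_geometric_of_lt_one h0 h1)]
  exact tsum_congr fun j => (ENNReal.ofReal_pow h0 j).symm

lemma geom_weighted (n : ℕ) (h0 : 0 ≤ lam n) (h1 : lam n < 1) :
    ∑' j : ℕ, ENNReal.ofReal (lam n) ^ j * (j : ℝ≥0∞)
      = ENNReal.ofReal (lam n / (1 - lam n) ^ 2) := by
  have hnorm : ‖lam n‖ < 1 := by rwa [Real.norm_eq_abs, abs_of_nonneg h0]
  have hs : Summable (fun j : ℕ => lam n ^ j * (j : ℝ)) := by
    have := summable_pow_mul_geometric_of_norm_lt_one (R := ℝ) 1 hnorm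
    simpa [mul_comm, pow_one] using this
  have ht : ∑' j : ℕ, lam n ^ j * (j : ℝ) = lam n / (1 - lam n) ^ 2 := by
    rw [← tsum_coe_mul_geometric_of_norm_lt_one hnorm]
    exact tsum_congr fun j => mul_comm _ _
  rw [← ht, ENNReal.ofReal_tsum_of_nonneg
    (fun j => mul_nonneg (pow_nonneg h0 j) (Nat.cast_nonneg j)) hs]
  exact tsum_congr fun j => by
    rw [ENNReal.ofReal_mul (pow_nonneg h0 j), ENNReal.ofReal_pow h0, ENNReal.ofReal_natCast]

/-- Splitting off the `m`-th coordinate, relative to a finite support bound. -/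
noncomputable def eraseEquivSub (m : ℕ) (s : Finset ℕ) (hm : m ∉ s) :
    {k : ℕ →₀ ℕ // k.support ⊆ insert m s} ≃ ℕ × {k : ℕ →₀ ℕ // k.support ⊆ s} where
  toFun k := (k.1 m, ⟨k.1.erase m, by
    intro x hx
    rw [Finsupp.support_erase, Finset.mem_erase] at hx
    rcases Finset.mem_insert.mp (k.2 hx.2) with h | h
    · exact absurd h hx.1
    · exact h⟩)
  invFun p := ⟨Finsupp.single m p.1 + p.2.1, by
    refine Finsupp.support_add.trans (Finset.union_subset ?_ ?_)
    · exact Finsupp.support_single_subset.trans (by simp)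
    · exact p.2.2.trans (Finset.subset_insert m s)⟩
  left_inv k := Subtype.ext (Finsupp.single_add_erase m k.1)
  right_inv := by
    rintro ⟨j, k', hk'⟩
    have hms : m ∉ k'.support := fun h => hm (hk' h)
    have hk0 : k' m = 0 := Finsupp.notMem_support_iff.mp hms
    refine Prod.ext ?_ (Subtype.ext ?_)
    · simp [Finsupp.add_apply, hk0]
    · simp [Finsupp.erase_add, Finsupp.erase_single, Finsupp.erase_of_notMem_support hms]

lemma Psum (s : Finset ℕ) :
    ∑' k : {k : ℕ →₀ ℕ // k.support ⊆ s}, mu lam k.1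
      = ∏ n ∈ s, ∑' j : ℕ, ENNReal.ofReal (lam n) ^ j := by
  classical
  induction s using Finset.induction_on with
  | empty =>
    rw [Finset.prod_empty]
    have huniq : ∀ k : {k : ℕ →₀ ℕ // k.support ⊆ (∅ : Finset ℕ)},
        k = ⟨0, by simp⟩ := by
      rintro ⟨k, hk⟩
      have : k = 0 := Finsupp.support_eq_empty.mp (Finset.subset_empty.mp hk)
      exact Subtype.ext this
    rw [tsum_eq_single (⟨0, by simp⟩ : {k : ℕ →₀ ℕ // k.support ⊆ (∅ : Finset ℕ)})
      (fun b hb => absurd (huniq b) hb)]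
    simp [mu]
  | @insert m s hm ih =>
    rw [Finset.prod_insert hm, ← ih,
      ← Equiv.tsum_eq (eraseEquivSub m s hm).symm (fun k => mu lam k.1)]
    have h : ∀ p : ℕ × {k : ℕ →₀ ℕ // k.support ⊆ s},
        mu lam ((eraseEquivSub m s hm).symm p).1
          = ENNReal.ofReal (lam m) ^ p.1 * mu lam p.2.1 := by
      rintro ⟨j, k'⟩
      show mu lam (Finsupp.single m j + k'.1) = _
      rw [mu_add, mu_single]
    rw [tsum_congr h, ENNReal.tsum_prod']
    simp_rw [ENNReal.tsum_mul_left]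
    rw [ENNReal.tsum_mul_right]

lemma ZB_eq :
    ∑' k : ℕ →₀ ℕ, mu lam k
      = ⨆ s : Finset ℕ, ∑' k : {k : ℕ →₀ ℕ // k.support ⊆ s}, mu lam k.1 := by
  classical
  apply le_antisymm
  · rw [ENNReal.tsum_eq_iSup_sum]
    apply iSup_le; intro F
    refine le_trans ?_ (le_iSup _ (F.sup Finsupp.support))
    set s := F.sup Finsupp.support with hs
    have hemb : ∀ k ∈ F, k.support ⊆ s := fun k hk => Finset.le_sup hk
    have h1 : ∑ k ∈ F, mu lam k
        = ∑ x ∈ F.attach.map ⟨fun x => (⟨x.1, hemb x.1 x.2⟩ : {k : ℕ →₀ ℕ // k.support ⊆ s}),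
            fun a b h => by
              simp only [Subtype.mk.injEq] at h
              exact Subtype.ext h⟩, mu lam x.1 := by
      rw [Finset.sum_map]
      exact (Finset.sum_attach F (fun k => mu lam k)).symm
    rw [h1]
    exact ENNReal.sum_le_tsum _
  · apply iSup_le; intro s
    exact Summable.tsum_le_tsum_of_inj Subtype.val Subtype.val_injective
      (fun _ _ => zero_le) (fun _ => le_rfl) ENNReal.summable ENNReal.summable

lemma ZB_det (h0 : ∀ n, 0 ≤ lam n) (h1 : ∀ n, lam n < 1) :
    ∑' k : ℕ →₀ ℕ, mu lam k
      = ⨆ s : Finset ℕ, ∏ n ∈ s, ENNReal.ofReal ((1 - lam n)⁻¹) := by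
  rw [ZB_eq]
  congr 1; funext s
  rw [Psum]
  exact Finset.prod_congr rfl fun n _ => geom lam n (h0 n) (h1 n)

lemma bose_weight (h0 : ∀ n, 0 ≤ lam n) (h1 : ∀ n, lam n < 1) (m : ℕ) :
    ∑' k : ℕ →₀ ℕ, mu lam k * ((k m : ℕ) : ℝ≥0∞)
      = ENNReal.ofReal (lam m / (1 - lam m)) * ∑' k : ℕ →₀ ℕ, mu lam k := by
  have hZ : ∑' k : ℕ →₀ ℕ, mu lam k
      = ENNReal.ofReal ((1 - lam m)⁻¹)
          * ∑' k' : {k : ℕ →₀ ℕ // k m = 0}, mu lam k'.1 := by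
    have := tsum_decomp lam m (fun _ => 1)
    simpa [geom lam m (h0 m) (h1 m)] using this
  have hW : ∑' k : ℕ →₀ ℕ, mu lam k * ((k m : ℕ) : ℝ≥0∞)
      = ENNReal.ofReal (lam m / (1 - lam m) ^ 2)
          * ∑' k' : {k : ℕ →₀ ℕ // k m = 0}, mu lam k'.1 := by
    have := tsum_decomp lam m (fun j => (j : ℝ≥0∞))
    rwa [geom_weighted lam m (h0 m) (h1 m)] at this
  rw [hW, hZ, ← mul_assoc, ← ENNReal.ofReal_mul (div_nonneg (h0 m) (by linarith [h1 m]))]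
  congr 2
  rw [sq, div_mul_eq_div_div, div_eq_mul_inv]

lemma pointwise_bose (h0 : ∀ n, 0 ≤ lam n) (h1 : ∀ n, lam n < 1) (k : ℕ →₀ ℕ) :
    ENNReal.ofReal
        (-((∏ n ∈ k.support, lam n ^ k n) * Real.log (∏ n ∈ k.support, lam n ^ k n)))
      = ∑' m : ℕ, mu lam k * ((k m : ℕ) : ℝ≥0∞) * ENNReal.ofReal (-Real.log (lam m)) := by
  rw [tsum_eq_sum (s := k.support) (fun m hm => by
    rw [Finsupp.notMem_support_iff.mp hm]; simp)]
  by_cases hz : ∃ n ∈ k.support, lam n = 0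
  · obtain ⟨n0, hn0, hz0⟩ := hz
    have hp : (∏ n ∈ k.support, lam n ^ k n) = 0 :=
      Finset.prod_eq_zero hn0 (by rw [hz0]; exact zero_pow (Finsupp.mem_support_iff.mp hn0))
    have hmu : mu lam k = 0 :=
      Finset.prod_eq_zero hn0
        (by rw [hz0, ENNReal.ofReal_zero]; exact zero_pow (Finsupp.mem_support_iff.mp hn0))
    simp [hp, hmu]
  · push_neg at hz
    have hne : ∀ n ∈ k.support, lam n ^ k n ≠ 0 := fun n hn => pow_ne_zero _ (hz n hn)
    have hμ0 : 0 ≤ ∏ n ∈ k.support, lam n ^ k n :=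
      Finset.prod_nonneg fun n _ => pow_nonneg (h0 n) _
    rw [Real.log_prod hne]
    have hexp : -((∏ n ∈ k.support, lam n ^ k n)
          * ∑ n ∈ k.support, Real.log (lam n ^ k n))
        = ∑ n ∈ k.support,
            (∏ i ∈ k.support, lam i ^ k i) * (k n * (-Real.log (lam n))) := by
      rw [Finset.mul_sum, ← Finset.sum_neg_distrib]
      exact Finset.sum_congr rfl fun n _ => by rw [Real.log_pow]; ring
    rw [hexp, ENNReal.ofReal_sum_of_nonneg (fun n _ =>
      mul_nonneg hμ0 (mul_nonneg (Nat.cast_nonneg _)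
        (neg_nonneg.mpr (Real.log_nonpos (h0 n) (le_of_lt (h1 n))))))]
    refine Finset.sum_congr rfl fun n _ => ?_
    rw [ENNReal.ofReal_mul hμ0, ENNReal.ofReal_mul (Nat.cast_nonneg _),
      ENNReal.ofReal_natCast, ← mul_assoc]
    congr 1
    congr 1
    rw [mu, ENNReal.ofReal_prod_of_nonneg (fun i _ => pow_nonneg (h0 i) _)]
    exact Finset.prod_congr rfl fun i _ => (ENNReal.ofReal_pow (h0 i) _)

/-! ### Fermi side -/

/-- Inserting `m` gives an equivalence between finsets avoiding `m` and finsets containing `m`. -/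
noncomputable def insertEquiv (m : ℕ) :
    {t : Finset ℕ // m ∉ t} ≃ {t : Finset ℕ // m ∈ t} where
  toFun t := ⟨insert m t.1, Finset.mem_insert_self m t.1⟩
  invFun t := ⟨t.1.erase m, Finset.notMem_erase m t.1⟩
  left_inv t := Subtype.ext (Finset.erase_insert t.2)
  right_inv t := Subtype.ext (Finset.insert_erase t.2)

lemma fermi_split (f : Finset ℕ → ℝ≥0∞) (m : ℕ) :
    ∑' t : Finset ℕ, f t
      = ∑' t : {t : Finset ℕ // m ∈ t}, f t.1
          + ∑' t : {t : Finset ℕ // m ∉ t}, f t.1 := by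
  exact (Summable.tsum_add_tsum_compl (s := {t : Finset ℕ | m ∈ t})
    ENNReal.summable ENNReal.summable).symm

lemma fermi_mem (m : ℕ) :
    ∑' t : {t : Finset ℕ // m ∈ t}, ∏ n ∈ t.1, ENNReal.ofReal (lam n)
      = ENNReal.ofReal (lam m)
          * ∑' t : {t : Finset ℕ // m ∉ t}, ∏ n ∈ t.1, ENNReal.ofReal (lam n) := by
  rw [← Equiv.tsum_eq (insertEquiv m)
    (fun t : {t : Finset ℕ // m ∈ t} => ∏ n ∈ t.1, ENNReal.ofReal (lam n))]
  rw [← ENNReal.tsum_mul_left]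
  exact tsum_congr fun t => Finset.prod_insert t.2

lemma fermi_weight (h0 : ∀ n, 0 ≤ lam n) (m : ℕ) :
    ∑' t : Finset ℕ,
        (∏ n ∈ t, ENNReal.ofReal (lam n)) * (if m ∈ t then (1 : ℝ≥0∞) else 0)
      = ENNReal.ofReal (lam m / (1 + lam m))
          * ∑' t : Finset ℕ, ∏ n ∈ t, ENNReal.ofReal (lam n) := by
  rw [fermi_split (fun t => (∏ n ∈ t, ENNReal.ofReal (lam n))
      * (if m ∈ t then (1 : ℝ≥0∞) else 0)) m,
    fermi_split (fun t => ∏ n ∈ t, ENNReal.ofReal (lam n)) m]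
  have h1 : ∑' t : {t : Finset ℕ // m ∈ t},
      (∏ n ∈ t.1, ENNReal.ofReal (lam n)) * (if m ∈ t.1 then (1 : ℝ≥0∞) else 0)
      = ∑' t : {t : Finset ℕ // m ∈ t}, ∏ n ∈ t.1, ENNReal.ofReal (lam n) :=
    tsum_congr fun t => by rw [if_pos t.2, mul_one]
  have h2 : ∑' t : {t : Finset ℕ // m ∉ t},
      (∏ n ∈ t.1, ENNReal.ofReal (lam n)) * (if m ∈ t.1 then (1 : ℝ≥0∞) else 0)
      = 0 := by
    rw [tsum_congr (fun t : {t : Finset ℕ // m ∉ t} => by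
      rw [if_neg t.2, mul_zero] :
      ∀ t : {t : Finset ℕ // m ∉ t},
        (∏ n ∈ t.1, ENNReal.ofReal (lam n)) * (if m ∈ t.1 then (1 : ℝ≥0∞) else 0) = 0)]
    exact tsum_zero
  rw [h1, h2, add_zero, fermi_mem]
  have hpos : (0 : ℝ) < 1 + lam m := by linarith [h0 m]
  have key : ENNReal.ofReal (lam m / (1 + lam m)) * (ENNReal.ofReal (lam m) + 1)
      = ENNReal.ofReal (lam m) := by
    rw [show (ENNReal.ofReal (lam m) + 1) = ENNReal.ofReal (1 + lam m) by
        rw [ENNReal.ofReal_add (by norm_num) (h0 m), ENNReal.ofReal_one, add_comm],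
      ← ENNReal.ofReal_mul (div_nonneg (h0 m) (le_of_lt hpos)),
      div_mul_cancel₀ _ (ne_of_gt hpos)]
  calc ENNReal.ofReal (lam m)
        * ∑' t : {t : Finset ℕ // m ∉ t}, ∏ n ∈ t.1, ENNReal.ofReal (lam n)
      = ENNReal.ofReal (lam m / (1 + lam m)) * ((ENNReal.ofReal (lam m) + 1)
          * ∑' t : {t : Finset ℕ // m ∉ t}, ∏ n ∈ t.1, ENNReal.ofReal (lam n)) := by
        rw [← mul_assoc, key]
    _ = _ := by ring

lemma ZF_det (h0 : ∀ n, 0 ≤ lam n) :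
    ∑' t : Finset ℕ, ∏ n ∈ t, ENNReal.ofReal (lam n)
      = ⨆ s : Finset ℕ, ∏ n ∈ s, ENNReal.ofReal (1 + lam n) := by
  classical
  have hprod : ∀ s : Finset ℕ, ∏ n ∈ s, ENNReal.ofReal (1 + lam n)
      = ∑ t ∈ s.powerset, ∏ n ∈ t, ENNReal.ofReal (lam n) := by
    intro s
    have : ∀ n ∈ s, ENNReal.ofReal (1 + lam n) = ENNReal.ofReal (lam n) + 1 := fun n _ => by
      rw [ENNReal.ofReal_add (by norm_num) (h0 n), ENNReal.ofReal_one, add_comm]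
    rw [Finset.prod_congr rfl this, Finset.prod_add]
    exact Finset.sum_congr rfl fun t _ => by rw [Finset.prod_const_one, mul_one]
  rw [ENNReal.tsum_eq_iSup_sum]
  apply le_antisymm
  · apply iSup_le; intro F
    refine le_trans ?_ (le_iSup _ (F.sup id))
    rw [hprod]
    refine Finset.sum_le_sum_of_subset ?_
    intro t ht
    exact Finset.mem_powerset.mpr (Finset.le_sup (f := id) ht)
  · apply iSup_le; intro s
    rw [hprod]
    exact le_iSup (fun F : Finset (Finset ℕ) =>
      ∑ t ∈ F, ∏ n ∈ t, ENNReal.ofReal (lam n)) s.powerset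

lemma pointwise_fermi (h0 : ∀ n, 0 ≤ lam n) (h1 : ∀ n, lam n < 1) (s : Finset ℕ) :
    ENNReal.ofReal (-((∏ n ∈ s, lam n) * Real.log (∏ n ∈ s, lam n)))
      = ∑' m : ℕ, (∏ n ∈ s, ENNReal.ofReal (lam n))
          * (if m ∈ s then (1 : ℝ≥0∞) else 0) * ENNReal.ofReal (-Real.log (lam m)) := by
  classical
  rw [tsum_eq_sum (s := s) (fun m hm => by rw [if_neg hm]; simp)]
  by_cases hz : ∃ n ∈ s, lam n = 0
  · obtain ⟨n0, hn0, hz0⟩ := hz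
    have hp : (∏ n ∈ s, lam n) = 0 := Finset.prod_eq_zero hn0 hz0
    have hmu : (∏ n ∈ s, ENNReal.ofReal (lam n)) = 0 :=
      Finset.prod_eq_zero hn0 (by rw [hz0, ENNReal.ofReal_zero])
    simp [hp, hmu]
  · push_neg at hz
    have hμ0 : 0 ≤ ∏ n ∈ s, lam n := Finset.prod_nonneg fun n _ => h0 n
    rw [Real.log_prod hz]
    have hexp : -((∏ n ∈ s, lam n) * ∑ n ∈ s, Real.log (lam n))
        = ∑ n ∈ s, (∏ i ∈ s, lam i) * (-Real.log (lam n)) := by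
      rw [Finset.mul_sum, ← Finset.sum_neg_distrib]
      exact Finset.sum_congr rfl fun n _ => by ring
    rw [hexp, ENNReal.ofReal_sum_of_nonneg (fun n _ =>
      mul_nonneg hμ0 (neg_nonneg.mpr (Real.log_nonpos (h0 n) (le_of_lt (h1 n)))))]
    refine Finset.sum_congr rfl fun n hn => ?_
    rw [if_pos hn, mul_one, ENNReal.ofReal_mul hμ0,
      ENNReal.ofReal_prod_of_nonneg (fun i _ => h0 i)]

end EntropySQ

open EntropySQ in
theorem entropy_second_quantisation (lam : ℕ → ℝ)
    (h0 : ∀ n, 0 ≤ lam n) (h1 : ∀ n, lam n < 1) (htr : Summable lam) :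
    (∑' k : ℕ →₀ ℕ, ENNReal.ofReal
        (-((∏ n ∈ k.support, lam n ^ k n) * Real.log (∏ n ∈ k.support, lam n ^ k n)))
      = (∑' n, ENNReal.ofReal (-(lam n / (1 - lam n) * Real.log (lam n)))) *
          (⨆ s : Finset ℕ, ∏ n ∈ s, ENNReal.ofReal ((1 - lam n)⁻¹))) ∧
    (∑' s : Finset ℕ, ENNReal.ofReal
        (-((∏ n ∈ s, lam n) * Real.log (∏ n ∈ s, lam n)))
      = (∑' n, ENNReal.ofReal (-(lam n / (1 + lam n) * Real.log (lam n)))) *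
          (⨆ s : Finset ℕ, ∏ n ∈ s, ENNReal.ofReal (1 + lam n))) := by
  constructor
  · -- Bose
    have step : ∀ m : ℕ,
        ENNReal.ofReal (-(lam m / (1 - lam m) * Real.log (lam m)))
          = ENNReal.ofReal (lam m / (1 - lam m)) * ENNReal.ofReal (-Real.log (lam m)) := by
      intro m
      rw [← ENNReal.ofReal_mul (div_nonneg (h0 m) (by linarith [h1 m]))]
      congr 1; ring
    calc ∑' k : ℕ →₀ ℕ, ENNReal.ofReal
          (-((∏ n ∈ k.support, lam n ^ k n) * Real.log (∏ n ∈ k.support, lam n ^ k n)))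
        = ∑' (k : ℕ →₀ ℕ) (m : ℕ),
            mu lam k * ((k m : ℕ) : ℝ≥0∞) * ENNReal.ofReal (-Real.log (lam m)) :=
          tsum_congr (pointwise_bose lam h0 h1)
      _ = ∑' (m : ℕ) (k : ℕ →₀ ℕ),
            mu lam k * ((k m : ℕ) : ℝ≥0∞) * ENNReal.ofReal (-Real.log (lam m)) :=
          ENNReal.tsum_comm
      _ = ∑' m : ℕ, (∑' k : ℕ →₀ ℕ, mu lam k * ((k m : ℕ) : ℝ≥0∞))
            * ENNReal.ofReal (-Real.log (lam m)) := by
          exact tsum_congr fun m => ENNReal.tsum_mul_right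
      _ = ∑' m : ℕ, (ENNReal.ofReal (lam m / (1 - lam m))
            * ENNReal.ofReal (-Real.log (lam m))) * (∑' k : ℕ →₀ ℕ, mu lam k) := by
          refine tsum_congr fun m => ?_
          rw [bose_weight lam h0 h1 m]; ring
      _ = (∑' m : ℕ, ENNReal.ofReal (lam m / (1 - lam m))
            * ENNReal.ofReal (-Real.log (lam m))) * (∑' k : ℕ →₀ ℕ, mu lam k) :=
          ENNReal.tsum_mul_right
      _ = (∑' n, ENNReal.ofReal (-(lam n / (1 - lam n) * Real.log (lam n)))) *
            (⨆ s : Finset ℕ, ∏ n ∈ s, ENNReal.ofReal ((1 - lam n)⁻¹)) := by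
          rw [ZB_det lam h0 h1]
          congr 1
          exact (tsum_congr step).symm
  · -- Fermi
    have step : ∀ m : ℕ,
        ENNReal.ofReal (-(lam m / (1 + lam m) * Real.log (lam m)))
          = ENNReal.ofReal (lam m / (1 + lam m)) * ENNReal.ofReal (-Real.log (lam m)) := by
      intro m
      rw [← ENNReal.ofReal_mul (div_nonneg (h0 m) (by linarith [h0 m]))]
      congr 1; ring
    calc ∑' s : Finset ℕ, ENNReal.ofReal
          (-((∏ n ∈ s, lam n) * Real.log (∏ n ∈ s, lam n)))
        = ∑' (s : Finset ℕ) (m : ℕ), (∏ n ∈ s, ENNReal.ofReal (lam n))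
            * (if m ∈ s then (1 : ℝ≥0∞) else 0) * ENNReal.ofReal (-Real.log (lam m)) :=
          tsum_congr (pointwise_fermi lam h0 h1)
      _ = ∑' (m : ℕ) (s : Finset ℕ), (∏ n ∈ s, ENNReal.ofReal (lam n))
            * (if m ∈ s then (1 : ℝ≥0∞) else 0) * ENNReal.ofReal (-Real.log (lam m)) :=
          ENNReal.tsum_comm
      _ = ∑' m : ℕ, (∑' s : Finset ℕ, (∏ n ∈ s, ENNReal.ofReal (lam n))
            * (if m ∈ s then (1 : ℝ≥0∞) else 0)) * ENNReal.ofReal (-Real.log (lam m)) :=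
          tsum_congr fun m => ENNReal.tsum_mul_right
      _ = ∑' m : ℕ, (ENNReal.ofReal (lam m / (1 + lam m))
            * ENNReal.ofReal (-Real.log (lam m)))
            * (∑' t : Finset ℕ, ∏ n ∈ t, ENNReal.ofReal (lam n)) := by
          refine tsum_congr fun m => ?_
          rw [fermi_weight lam h0 m]; ring
      _ = (∑' m : ℕ, ENNReal.ofReal (lam m / (1 + lam m))
            * ENNReal.ofReal (-Real.log (lam m)))
            * (∑' t : Finset ℕ, ∏ n ∈ t, ENNReal.ofReal (lam n)) :=
          ENNReal.tsum_mul_right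
      _ = (∑' n, ENNReal.ofReal (-(lam n / (1 + lam n) * Real.log (lam n)))) *
            (⨆ s : Finset ℕ, ∏ n ∈ s, ENNReal.ofReal (1 + lam n)) := by
          rw [ZF_det lam h0]
          congr 1
          exact (tsum_congr step).symm
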